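/- Let G be a finite simple connected graph with nonempty sink Z and fix a starting vertex a and an initial rotor configuration ρ. If after m sequential rotor walks the rotor configuration returns to ρ (i.e., σ^m(ρ) = ρ), then for every vertex x and every neighbor y of x, the total number of traversals of the directed edge (y,x) over the m walks equals S_m(ρ,y)/deg(y), where S_m(ρ,y) is the total number of visits to y. -/

import Mathlib

open MeasureTheory Filter ENNReal Set

namespace RotorWalk

variable {V : Type*} [DecidableEq V]

/-- One step of the rotor walk with local mechanisms `τ`:
the rotor at the current position is advanced and the walker follows it. -/
def step (τ : V → V → V) (p : V × (V → V)) : V × (V → V) :=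
  (τ p.1 (p.2 p.1), Function.update p.2 p.1 (τ p.1 (p.2 p.1)))

/-- Trajectory (position, rotor configuration) of the rotor walk started at `a`
with initial rotor configuration `ρ`. -/
def traj (τ : V → V → V) (a : V) (ρ : V → V) : ℕ → V × (V → V)
  | 0 => (a, ρ)
  | t + 1 => step τ (traj τ a ρ t)

/-- Position of the walker at time `t`. -/
def pos (τ : V → V → V) (a : V) (ρ : V → V) (t : ℕ) : V := (traj τ a ρ t).1

/-- Rotor configuration at time `t`. -/
def conf (τ : V → V → V) (a : V) (ρ : V → V) (t : ℕ) : V → V := (traj τ a ρ t).2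

/-- The walk has not hit the sink `Z` up to and including time `t`. -/
def aliveAt (τ : V → V → V) (Z : Set V) (a : V) (ρ : V → V) (t : ℕ) : Prop :=
  ∀ s ≤ t, pos τ a ρ s ∉ Z

/-- Odometer: the number of visits to `x` strictly before hitting the sink `Z`. -/
noncomputable def odometer (τ : V → V → V) (Z : Set V) (a : V) (ρ : V → V) (x : V) : ℕ∞ :=
  {t : ℕ | aliveAt τ Z a ρ t ∧ pos τ a ρ t = x}.encard

/-- Number of traversals of the directed edge `(y, x)` strictly before hitting `Z`. -/
noncomputable def edgeCount (τ : V → V → V) (Z : Set V) (a : V) (ρ : V → V) (y x : V) : ℕ∞ :=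
  {t : ℕ | aliveAt τ Z a ρ t ∧ pos τ a ρ t = y ∧ pos τ a ρ (t + 1) = x}.encard

open Classical in
/-- The final rotor configuration: the configuration at the hitting time of `Z` if the walk
hits `Z`, and otherwise the pointwise eventual value of the rotor configuration
(which exists when the walk is transient). -/
noncomputable def finalConf (τ : V → V → V) (Z : Set V) (a : V) (ρ : V → V) : V → V :=
  if ∃ t, pos τ a ρ t ∈ Z then conf τ a ρ (sInf {t | pos τ a ρ t ∈ Z})
  else fun x => if h : ∃ v, ∀ᶠ t in atTop, conf τ a ρ t x = v then h.choose else ρ x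

/-- Total number of visits to `x` by `n` sequential rotor walks (rotors not reset). -/
noncomputable def Svis (τ : V → V → V) (Z : Set V) (a : V) (ρ : V → V) (n : ℕ) (x : V) : ℕ∞ :=
  ∑ i ∈ Finset.range n, odometer τ Z a ((finalConf τ Z a)^[i] ρ) x

/-- Total number of traversals of the directed edge `(y,x)` by `n` sequential rotor walks. -/
noncomputable def Sedge (τ : V → V → V) (Z : Set V) (a : V) (ρ : V → V) (n : ℕ) (y x : V) : ℕ∞ :=
  ∑ i ∈ Finset.range n, edgeCount τ Z a ((finalConf τ Z a)^[i] ρ) y x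

/-- The rotor walk is transient: every vertex is visited finitely often (before hitting `Z`). -/
def IsTransientWalk (τ : V → V → V) (Z : Set V) (a : V) (ρ : V → V) : Prop :=
  ∀ x : V, {t : ℕ | aliveAt τ Z a ρ t ∧ pos τ a ρ t = x}.Finite

open Classical in
/-- Total number of visits to `x` by `n` sequential rotor walks with empty sink,
set to `⊤` if one of the `n` walks fails to be transient. -/
noncomputable def SvisT (τ : V → V → V) (a : V) (ρ : V → V) (n : ℕ) (x : V) : ℕ∞ :=
  if ∀ i < n, IsTransientWalk τ ∅ a ((finalConf τ ∅ a)^[i] ρ) then Svis τ ∅ a ρ n x else ⊤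

/-- The local mechanisms map neighbors to neighbors and have a single orbit on each
neighborhood (off the sink). -/
def ValidMechanism (G : SimpleGraph V) (Z : Set V) (τ : V → V → V) : Prop :=
  ∀ x ∉ Z, (∀ y, G.Adj x y → G.Adj x (τ x y)) ∧
    ∀ y, G.Adj x y → ∀ z, G.Adj x z → ∃ i : ℕ, (τ x)^[i] y = z

/-- A rotor configuration: every rotor (off the sink) points to a neighbor. -/
def ValidConfig (G : SimpleGraph V) (Z : Set V) (ρ : V → V) : Prop :=
  ∀ x ∉ Z, G.Adj x (ρ x)

/-- Time-`t` distribution of the simple random walk started at `a` and killed on `Z`. -/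
noncomputable def srw (G : SimpleGraph V) [G.LocallyFinite] (Z : Set V) (a : V) :
    ℕ → V → ℝ≥0∞
  | 0 => Set.indicator {a} 1
  | t + 1 => fun x =>
      ∑' y : V, Set.indicator {y | G.Adj y x ∧ y ∉ Z}
        (fun y => srw G Z a t y / (G.degree y : ℝ≥0∞)) y

/-- Green function: the expected number of visits to a vertex, strictly before hitting `Z`,
of the simple random walk started at `a`. -/
noncomputable def green (G : SimpleGraph V) [G.LocallyFinite] (Z : Set V) (a : V) : V → ℝ≥0∞ :=
  Set.indicator Zᶜ (fun x => ∑' t : ℕ, srw G Z a t x)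

/-- The graph is transient: the Green function (with empty sink) is finite. -/
def TransientGraph (G : SimpleGraph V) [G.LocallyFinite] : Prop :=
  ∀ a x : V, green G ∅ a x < ⊤

/-- A `Z`-oriented spanning forest, encoded as a rotor configuration: off `Z` it points to a
neighbor, on `Z` it is normalized to the identity, and every vertex eventually reaches `Z`. -/
def IsOSF (G : SimpleGraph V) (Z : Set V) (ρ : V → V) : Prop :=
  (∀ x ∉ Z, G.Adj x (ρ x)) ∧ (∀ x ∈ Z, ρ x = x) ∧ ∀ x : V, ∃ n : ℕ, ρ^[n] x ∈ Z

/-- An oriented spanning forest of an infinite graph: every vertex has out-degree one along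
an edge and there is no directed cycle. -/
def IsOSFInf (G : SimpleGraph V) (ρ : V → V) : Prop :=
  (∀ x, G.Adj x (ρ x)) ∧ ∀ x : V, ∀ n > 0, ρ^[n] x ≠ x

/-- A spanning forest of the ball of radius `R` around `a`, oriented toward the boundary
sphere (the sink), normalized to the identity outside the open ball. -/
def IsOSFBall (G : SimpleGraph V) (a : V) (R : ℕ) (ρ : V → V) : Prop :=
  (∀ x, G.dist a x < R → G.Adj x (ρ x)) ∧
  (∀ x, ¬ G.dist a x < R → ρ x = x) ∧
  ∀ x, G.dist a x < R → ∃ n : ℕ, G.dist a (ρ^[n] x) = R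

instance : MeasurableSpace (V → V) := ⊤

/-- `μ` is the oriented wired uniform spanning forest measure of `G` (with respect to the
exhaustion by balls around `a`): it is a probability measure supported on oriented spanning
forests whose finite-dimensional marginals are the limits of the uniform measures on
boundary-oriented spanning forests of the balls. -/
def IsOWUSF (G : SimpleGraph V) (a : V) (μ : Measure (V → V)) : Prop :=
  IsProbabilityMeasure μ ∧
  (∀ᵐ ρ ∂μ, IsOSFInf G ρ) ∧
  ∀ B : Finset (V × V),
    Tendsto (fun R : ℕ =>
        (({ρ : V → V | IsOSFBall G a R ρ ∧ ∀ e ∈ B, ρ e.1 = e.2}.ncard : ℝ) /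
          ({ρ : V → V | IsOSFBall G a R ρ}.ncard : ℝ))) atTop
      (nhds ((μ {ρ : V → V | ∀ e ∈ B, ρ e.1 = e.2}).toReal))

/-- Vertex-transitivity. -/
def VertexTransitive (G : SimpleGraph V) : Prop :=
  ∀ u v : V, ∃ φ : G ≃g G, φ u = v

/-- `μ` is stationary for the rotor walk (empty sink) started at `a`: almost every walk is
transient and the final rotor configuration again has law `μ`. -/
def RWStationary (τ : V → V → V) (a : V) (μ : Measure (V → V)) : Prop :=
  (∀ᵐ ρ ∂μ, IsTransientWalk τ ∅ a ρ) ∧ μ.map (finalConf τ ∅ a) = μ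


section AuxLemmas

variable {τ : V → V → V} {a : V} {ρ : V → V} {y x : V}

/-- Number of visits to `y` strictly before time `t`. -/
def nvisit (τ : V → V → V) (a : V) (ρ : V → V) (y : V) (t : ℕ) : ℕ :=
  ((Finset.range t).filter (fun s => pos τ a ρ s = y)).card

lemma nvisit_succ (t : ℕ) :
    nvisit τ a ρ y (t + 1) =
      if pos τ a ρ t = y then nvisit τ a ρ y t + 1 else nvisit τ a ρ y t := by
  unfold nvisit
  rw [Finset.range_add_one, Finset.filter_insert]
  split_ifs with h
  · rw [Finset.card_insert_of_notMem (by simp)]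
  · rfl

lemma nvisit_mono : Monotone (nvisit τ a ρ y) := by
  intro s t hst
  exact Finset.card_le_card
    (Finset.filter_subset_filter _ (Finset.range_subset_range.2 hst))

lemma nvisit_le (t : ℕ) : nvisit τ a ρ y t ≤ t :=
  le_trans (Finset.card_filter_le _ _) (by simp)

lemma conf_eq_iterate (t : ℕ) :
    conf τ a ρ t y = (τ y)^[nvisit τ a ρ y t] (ρ y) := by
  induction t with
  | zero => rfl
  | succ t ih =>
    have hc : conf τ a ρ (t + 1) = Function.update (conf τ a ρ t) (pos τ a ρ t)
        (τ (pos τ a ρ t) (conf τ a ρ t (pos τ a ρ t))) := rfl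
    rw [hc, nvisit_succ]
    by_cases h : pos τ a ρ t = y
    · rw [if_pos h, h, Function.update_self, ih, Function.iterate_succ_apply']
    · rw [if_neg h, Function.update_of_ne (fun hy => h hy.symm), ih]

lemma pos_visit_succ {t : ℕ} (h : pos τ a ρ t = y) :
    pos τ a ρ (t + 1) = (τ y)^[nvisit τ a ρ y t + 1] (ρ y) := by
  have hp : pos τ a ρ (t + 1) = τ (pos τ a ρ t) (conf τ a ρ t (pos τ a ρ t)) := rfl
  rw [hp, h, conf_eq_iterate, Function.iterate_succ_apply']

lemma nvisit_lt_of_visit {s t : ℕ} (h : pos τ a ρ s = y) (hst : s < t) :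
    nvisit τ a ρ y s < nvisit τ a ρ y t := by
  have h1 : nvisit τ a ρ y (s + 1) = nvisit τ a ρ y s + 1 := by
    simp [nvisit_succ, h]
  have h2 : nvisit τ a ρ y (s + 1) ≤ nvisit τ a ρ y t := nvisit_mono hst
  omega

lemma exists_visit_of_lt_nvisit {j t : ℕ} (h : j < nvisit τ a ρ y t) :
    ∃ s < t, pos τ a ρ s = y ∧ nvisit τ a ρ y s = j := by
  induction t with
  | zero => simp [nvisit] at h
  | succ t ih =>
    by_cases h' : j < nvisit τ a ρ y t
    · obtain ⟨s, hs, h1, h2⟩ := ih h'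
      exact ⟨s, Nat.lt_succ_of_lt hs, h1, h2⟩
    · have hs := nvisit_succ (τ := τ) (a := a) (ρ := ρ) (y := y) t
      by_cases hp : pos τ a ρ t = y
      · rw [if_pos hp] at hs
        exact ⟨t, Nat.lt_succ_self t, hp, by omega⟩
      · rw [if_neg hp] at hs; omega

lemma aliveAt_mono {Z : Set V} {s t : ℕ} (h : aliveAt τ Z a ρ t) (hst : s ≤ t) :
    aliveAt τ Z a ρ s := fun u hu => h u (hu.trans hst)

lemma eventually_choose_eq {α : Type*} {f : ℕ → α} (h : ∃ v, ∀ᶠ t in atTop, f t = v)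
    {v : α} (hv : ∀ᶠ t in atTop, f t = v) : h.choose = v := by
  obtain ⟨t, h1, h2⟩ := (h.choose_spec.and hv).exists
  rw [← h1, h2]

open Classical in
lemma core {Z : Set V}
    (hfin : {t | aliveAt τ Z a ρ t ∧ pos τ a ρ t = y}.Finite) :
    ∃ T : ℕ, {t | aliveAt τ Z a ρ t ∧ pos τ a ρ t = y} = {t | t < T ∧ pos τ a ρ t = y} ∧
      finalConf τ Z a ρ y = (τ y)^[nvisit τ a ρ y T] (ρ y) := by
  by_cases hhit : ∃ t, pos τ a ρ t ∈ Z
  · set T := sInf {t | pos τ a ρ t ∈ Z} with hT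
    have hTZ : pos τ a ρ T ∈ Z := Nat.sInf_mem hhit
    have halive : ∀ t, aliveAt τ Z a ρ t ↔ t < T := by
      intro t
      constructor
      · intro h
        by_contra hc
        exact h T (le_of_not_gt hc) hTZ
      · intro h s hs hsZ
        have := Nat.sInf_le (show s ∈ {t | pos τ a ρ t ∈ Z} from hsZ)
        omega
    refine ⟨T, ?_, ?_⟩
    · ext t; simp only [Set.mem_setOf_eq, halive]
    · rw [finalConf, if_pos hhit, ← hT, conf_eq_iterate]
  · have halive : ∀ t, aliveAt τ Z a ρ t := fun t s _ hs => hhit ⟨s, hs⟩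
    have hAset : {t | aliveAt τ Z a ρ t ∧ pos τ a ρ t = y} = {t | pos τ a ρ t = y} := by
      ext t; simp only [Set.mem_setOf_eq, halive t, true_and]
    have hfin' : {t | pos τ a ρ t = y}.Finite := hAset ▸ hfin
    obtain ⟨T, hTb⟩ : ∃ T, ∀ t, pos τ a ρ t = y → t < T := by
      obtain ⟨b, hb⟩ := hfin'.bddAbove
      exact ⟨b + 1, fun t ht => Nat.lt_succ_of_le (hb ht)⟩
    have hstab : ∀ t, T ≤ t → nvisit τ a ρ y t = nvisit τ a ρ y T := by
      intro t ht
      refine le_antisymm ?_ (nvisit_mono ht)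
      by_contra hc
      push_neg at hc
      obtain ⟨s, hst, h1, h2⟩ := exists_visit_of_lt_nvisit hc
      have := nvisit_lt_of_visit h1 (hTb s h1)
      omega
    have hev : ∀ᶠ t in atTop, conf τ a ρ t y = (τ y)^[nvisit τ a ρ y T] (ρ y) :=
      Filter.eventually_atTop.2 ⟨T, fun t ht => by rw [conf_eq_iterate, hstab t ht]⟩
    refine ⟨T, ?_, ?_⟩
    · ext t
      simp only [Set.mem_setOf_eq, halive t, true_and]
      exact ⟨fun h => ⟨hTb t h, h⟩, fun h => h.2⟩
    · rw [finalConf, if_neg hhit]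
      show (if h : ∃ v, ∀ᶠ t in atTop, conf τ a ρ t y = v then h.choose else ρ y) = _
      rw [dif_pos ⟨_, hev⟩]
      exact eventually_choose_eq _ hev

open Classical in
lemma finalConf_eq_iterate' {Z : Set V} :
    ∃ k, finalConf τ Z a ρ y = (τ y)^[k] (ρ y) := by
  by_cases hhit : ∃ t, pos τ a ρ t ∈ Z
  · rw [finalConf, if_pos hhit]
    exact ⟨_, conf_eq_iterate _⟩
  · rw [finalConf, if_neg hhit]
    show ∃ k, (if h : ∃ v, ∀ᶠ t in atTop, conf τ a ρ t y = v then h.choose else ρ y) = _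
    by_cases h : ∃ v, ∀ᶠ t in atTop, conf τ a ρ t y = v
    · rw [dif_pos h]
      obtain ⟨t, ht⟩ := h.choose_spec.exists
      exact ⟨nvisit τ a ρ y t, by rw [← ht, conf_eq_iterate]⟩
    · rw [dif_neg h]
      exact ⟨0, rfl⟩

lemma walkFinite {Z : Set V}
    (hfin : {t | aliveAt τ Z a ρ t ∧ pos τ a ρ t = y}.Finite) :
    ∃ n : ℕ, odometer τ Z a ρ y = n ∧
      finalConf τ Z a ρ y = (τ y)^[n] (ρ y) ∧
      ∀ x, edgeCount τ Z a ρ y x =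
        (((Finset.range n).filter (fun k => (τ y)^[k + 1] (ρ y) = x)).card : ℕ∞) := by
  obtain ⟨T, hA, hF⟩ := core hfin
  refine ⟨nvisit τ a ρ y T, ?_, hF, ?_⟩
  · rw [odometer, hA]
    have hs : {t | t < T ∧ pos τ a ρ t = y} =
        ↑((Finset.range T).filter (fun s => pos τ a ρ s = y)) := by
      ext t; simp
    rw [hs, Set.encard_coe_eq_coe_finsetCard]
    rfl
  · intro x
    rw [edgeCount]
    have hset : {t | aliveAt τ Z a ρ t ∧ pos τ a ρ t = y ∧ pos τ a ρ (t + 1) = x} =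
        ↑(((Finset.range T).filter (fun s => pos τ a ρ s = y)).filter
            (fun s => pos τ a ρ (s + 1) = x)) := by
      ext t
      simp only [Set.mem_setOf_eq, Finset.coe_filter, Finset.mem_filter, Finset.mem_range]
      constructor
      · rintro ⟨h1, h2, h3⟩
        have ht : t ∈ {t | aliveAt τ Z a ρ t ∧ pos τ a ρ t = y} := ⟨h1, h2⟩
        rw [hA] at ht
        exact ⟨⟨ht.1, h2⟩, h3⟩
      · rintro ⟨⟨h1, h2⟩, h3⟩
        have ht : t ∈ {t | t < T ∧ pos τ a ρ t = y} := ⟨h1, h2⟩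
        rw [← hA] at ht
        exact ⟨ht.1, h2, h3⟩
    rw [hset, Set.encard_coe_eq_coe_finsetCard, Nat.cast_inj]
    refine Finset.card_bij (fun t _ => nvisit τ a ρ y t) ?_ ?_ ?_
    · intro t ht
      simp only [Finset.mem_filter, Finset.mem_range] at ht ⊢
      obtain ⟨⟨h1, h2⟩, h3⟩ := ht
      refine ⟨nvisit_lt_of_visit h2 h1, ?_⟩
      rw [← pos_visit_succ h2, h3]
    · intro t1 h1 t2 h2 he
      have he' : nvisit τ a ρ y t1 = nvisit τ a ρ y t2 := he
      simp only [Finset.mem_filter, Finset.mem_range] at h1 h2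
      rcases lt_trichotomy t1 t2 with h | h | h
      · have := nvisit_lt_of_visit h1.1.2 h; omega
      · exact h
      · have := nvisit_lt_of_visit h2.1.2 h; omega
    · intro k hk
      simp only [Finset.mem_filter, Finset.mem_range] at hk
      obtain ⟨hk1, hk2⟩ := hk
      obtain ⟨s, hsT, h1, h2⟩ := exists_visit_of_lt_nvisit hk1
      refine ⟨s, ?_, h2⟩
      simp only [Finset.mem_filter, Finset.mem_range]
      exact ⟨⟨hsT, h1⟩, by rw [pos_visit_succ h1, h2, hk2]⟩

lemma walkInfinite {Z : Set V}
    (hinf : {t | aliveAt τ Z a ρ t ∧ pos τ a ρ t = y}.Infinite)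
    (hstep : ∀ k : ℕ, ∃ i : ℕ, (τ y)^[i + k] (ρ y) = x) :
    edgeCount τ Z a ρ y x = ⊤ := by
  have hinj : Set.InjOn (nvisit τ a ρ y) {t | aliveAt τ Z a ρ t ∧ pos τ a ρ t = y} := by
    intro t1 h1 t2 h2 he
    rcases lt_trichotomy t1 t2 with h | h | h
    · have := nvisit_lt_of_visit h1.2 h; omega
    · exact h
    · have := nvisit_lt_of_visit h2.2 h; omega
  have claim1 : ∀ j : ℕ, ∃ t, aliveAt τ Z a ρ t ∧ pos τ a ρ t = y ∧ nvisit τ a ρ y t = j := by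
    intro j
    have himg := hinf.image hinj
    obtain ⟨u, hu, hju⟩ := himg.exists_gt j
    obtain ⟨t0, ht0, rfl⟩ := hu
    obtain ⟨s, hst, h1, h2⟩ := exists_visit_of_lt_nvisit hju
    exact ⟨s, aliveAt_mono ht0.1 hst.le, h1, h2⟩
  rw [edgeCount, Set.encard_eq_top]
  refine Set.infinite_of_forall_exists_gt ?_
  intro N
  obtain ⟨i, hi⟩ := hstep (N + 2)
  obtain ⟨t, h1, h2, h3⟩ := claim1 (i + N + 1)
  refine ⟨t, ⟨h1, h2, ?_⟩, ?_⟩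
  · rw [pos_visit_succ h2, h3, show i + N + 1 + 1 = i + (N + 2) by omega, hi]
  · have := nvisit_le (τ := τ) (a := a) (ρ := ρ) (y := y) t
    omega

lemma adj_iterate {G : SimpleGraph V} {f : V → V} {y c : V}
    (hm : ∀ z, G.Adj y z → G.Adj y (f z)) (hc : G.Adj y c) :
    ∀ k, G.Adj y (f^[k] c) := by
  intro k
  induction k with
  | zero => exact hc
  | succ k ih => rw [Function.iterate_succ_apply']; exact hm _ ih

lemma iterate_mem_finset {f : V → V} {N : Finset V} (hmaps : ∀ z ∈ N, f z ∈ N) {c : V}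
    (hc : c ∈ N) : ∀ k, f^[k] c ∈ N := by
  intro k
  induction k with
  | zero => exact hc
  | succ k ih => rw [Function.iterate_succ_apply']; exact hmaps _ ih

lemma count_period {f : V → V} {c x : V} {N : Finset V} (hc : c ∈ N) (hx : x ∈ N)
    (hmaps : ∀ z ∈ N, f z ∈ N) (horb : ∀ z ∈ N, ∀ w ∈ N, ∃ i, f^[i] z = w)
    {S : ℕ} (hS : f^[S] c = c) :
    ∃ q, S = N.card * q ∧
      ((Finset.range S).filter (fun k => f^[k + 1] c = x)).card = q := by
  rcases Nat.eq_zero_or_pos S with rfl | hS0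
  · exact ⟨0, by simp, by rw [Finset.filter_eq_empty_iff.2 (by simp)]; simp⟩
  have hPne : ∃ p, 0 < p ∧ f^[p] c = c := ⟨S, hS0, hS⟩
  set p := sInf {p | 0 < p ∧ f^[p] c = c} with hpdef
  obtain ⟨hp0, hpc⟩ : 0 < p ∧ f^[p] c = c := Nat.sInf_mem hPne
  have hmin : ∀ q, 0 < q → f^[q] c = c → p ≤ q := fun q h1 h2 => Nat.sInf_le ⟨h1, h2⟩
  have hred : ∀ u, f^[u] c = f^[u % p] c := by
    intro u
    conv_lhs => rw [← Nat.mod_add_div u p]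
    rw [Function.iterate_add_apply, Function.iterate_mul, Function.iterate_fixed hpc]
  have hinj : ∀ i < p, ∀ j < p, f^[i] c = f^[j] c → i = j := by
    intro i hi j hj he
    by_contra hne
    wlog hij : i < j generalizing i j
    · exact this j hj i hi he.symm (Ne.symm hne) (by omega)
    have hcc : f^[p - j + i] c = c := by
      rw [Function.iterate_add_apply, he, ← Function.iterate_add_apply,
        Nat.sub_add_cancel hj.le, hpc]
    have := hmin _ (by omega) hcc
    omega
  have hmodiff : ∀ u v, f^[u] c = f^[v] c ↔ u % p = v % p := by
    intro u v
    constructor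
    · intro h
      exact hinj _ (Nat.mod_lt _ hp0) _ (Nat.mod_lt _ hp0)
        (by rw [← hred, ← hred, h])
    · intro h; rw [hred u, hred v, h]
  have hcb : p = N.card := by
    rw [← Finset.card_range p]
    refine Finset.card_bij (fun k _ => f^[k] c) (fun k _ => iterate_mem_finset hmaps hc k)
      ?_ ?_
    · intro k1 h1 k2 h2 he
      exact hinj _ (Finset.mem_range.1 h1) _ (Finset.mem_range.1 h2) he
    · intro w hw
      obtain ⟨i, hi⟩ := horb c hc w hw
      exact ⟨i % p, Finset.mem_range.2 (Nat.mod_lt _ hp0), show f^[i % p] c = w by rw [← hred, hi]⟩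
  have hdvdm : S % p = 0 := by
    have h0 : f^[S] c = f^[0] c := by simpa using hS
    have := (hmodiff S 0).1 h0
    simpa using this
  have hdvd : p ∣ S := Nat.dvd_of_mod_eq_zero hdvdm
  obtain ⟨i0, hi0⟩ := horb c hc x hx
  set r := i0 % p with hrdef
  have hrp : r < p := Nat.mod_lt _ hp0
  have hxr : f^[r] c = x := by rw [← hred, hi0]
  have hcond : ∀ k : ℕ, (f^[k + 1] c = x ↔ (k + 1) % p = r) := by
    intro k
    rw [← hxr, hmodiff, Nat.mod_eq_of_lt hrp]
  have hmod_inj : ∀ u v : ℕ, (u + 1) % p = (v + 1) % p → u % p = v % p := by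
    intro u v h
    have h1 : f^[u + 1] c = f^[v + 1] c := (hmodiff _ _).2 h
    have h2 : f^[u + p] c = f^[v + p] c := by
      have e : ∀ w : ℕ, w + p = (p - 1) + (w + 1) := by omega
      rw [e u, e v, Function.iterate_add_apply f (p - 1) (u + 1),
        Function.iterate_add_apply f (p - 1) (v + 1), h1]
    have h3 := (hmodiff _ _).1 h2
    rwa [Nat.add_mod_right, Nat.add_mod_right] at h3
  refine ⟨S / p, by rw [← hcb, Nat.mul_div_cancel' hdvd], ?_⟩
  rw [← Finset.card_range (S / p)]
  refine Finset.card_bij (fun k _ => k / p) ?_ ?_ ?_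
  · intro k hk
    simp only [Finset.mem_filter, Finset.mem_range] at hk ⊢
    exact Nat.div_lt_div_of_lt_of_dvd hdvd hk.1
  · intro k1 h1 k2 h2 he
    have he' : k1 / p = k2 / p := he
    simp only [Finset.mem_filter, Finset.mem_range] at h1 h2
    have e1 := (hcond k1).1 h1.2
    have e2 := (hcond k2).1 h2.2
    have hm := hmod_inj k1 k2 (by rw [e1, e2])
    calc k1 = p * (k1 / p) + k1 % p := (Nat.div_add_mod k1 p).symm
      _ = p * (k2 / p) + k2 % p := by rw [he', hm]
      _ = k2 := Nat.div_add_mod k2 p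
  · intro j hj
    rw [Finset.mem_range] at hj
    obtain ⟨w, hwp, hw⟩ : ∃ w, w < p ∧ (w + 1) % p = r := by
      rcases Nat.eq_zero_or_pos r with hr0 | hr0
      · exact ⟨p - 1, by omega, by rw [Nat.sub_add_cancel hp0, Nat.mod_self, hr0]⟩
      · exact ⟨r - 1, by omega, by rw [Nat.sub_add_cancel hr0, Nat.mod_eq_of_lt hrp]⟩
    refine ⟨p * j + w, ?_, ?_⟩
    · simp only [Finset.mem_filter, Finset.mem_range]
      constructor
      · calc p * j + w < p * j + p := by omega
          _ = p * (j + 1) := by ring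
          _ ≤ p * (S / p) := Nat.mul_le_mul_left p (by omega)
          _ = S := Nat.mul_div_cancel' hdvd
      · rw [hcond, show p * j + w + 1 = p * j + (w + 1) by omega, Nat.mul_add_mod, hw]
    · show (p * j + w) / p = j
      rw [Nat.mul_add_div hp0, Nat.div_eq_of_lt hwp, Nat.add_zero]

lemma filter_range_add_card (P : ℕ → Prop) [DecidablePred P] (a b : ℕ) :
    ((Finset.range (a + b)).filter P).card =
      ((Finset.range a).filter P).card +
        ((Finset.range b).filter (fun k => P (a + k))).card := by
  have hdisj : Disjoint ((Finset.range a).filter P)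
      (((Finset.range b).map (addLeftEmbedding a)).filter P) := by
    rw [Finset.disjoint_left]
    intro k hk hk'
    simp only [Finset.mem_filter, Finset.mem_range] at hk
    simp only [Finset.mem_filter, Finset.mem_map, Finset.mem_range] at hk'
    obtain ⟨⟨w, hw, hwk⟩, -⟩ := hk'
    rw [addLeftEmbedding_apply] at hwk
    omega
  rw [Finset.range_add, Finset.filter_union, Finset.card_union_of_disjoint hdisj]
  congr 1
  rw [Finset.filter_map, Finset.card_map]
  apply Finset.card_nbij id
  · intro k hk
    simp only [Finset.mem_coe, Finset.mem_filter, Function.comp] at hk ⊢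
    rw [addLeftEmbedding_apply] at hk
    exact ⟨hk.1, hk.2⟩
  · exact Set.injOn_id _
  · intro k hk
    simp only [Finset.coe_filter, Set.mem_setOf_eq, Finset.mem_filter] at hk ⊢
    refine ⟨k, ?_, rfl⟩
    simp only [Finset.mem_filter, Function.comp, addLeftEmbedding_apply]
    exact ⟨hk.1, hk.2⟩

end AuxLemmas

/-- if after `m` sequential rotor walks the rotor configuration returns to `ρ`,
then for every vertex `x` and neighbor `y` of `x`, the total number of traversals of the
directed edge `(y,x)` equals `S_m(ρ,y) / deg(y)`. -/
theorem edgeCount_eq_visits_div_degree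
    {V : Type*} [DecidableEq V] [Fintype V]
    (G : SimpleGraph V) [G.LocallyFinite] (hconn : G.Connected)
    (Z : Set V) (hZ : Z.Nonempty)
    (τ : V → V → V) (hτ : ValidMechanism G Z τ)
    (a : V) (ρ : V → V) (hρ : ValidConfig G Z ρ)
    (m : ℕ) (hper : (finalConf τ Z a)^[m] ρ = ρ)
    (x y : V) (hadj : G.Adj x y) :
    (Sedge τ Z a ρ m y x : ℝ≥0∞) =
      (Svis τ Z a ρ m y : ℝ≥0∞) / (G.degree y : ℝ≥0∞) := by
  by_cases hyZ : y ∈ Z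
  · have hodo : ∀ ρ' : V → V, odometer τ Z a ρ' y = 0 := by
      intro ρ'
      rw [odometer, Set.encard_eq_zero]
      ext t
      simp only [Set.mem_setOf_eq, Set.mem_empty_iff_false, iff_false, not_and]
      intro h1 h2
      exact h1 t le_rfl (h2 ▸ hyZ)
    have hedge : ∀ ρ' : V → V, edgeCount τ Z a ρ' y x = 0 := by
      intro ρ'
      rw [edgeCount, Set.encard_eq_zero]
      ext t
      simp only [Set.mem_setOf_eq, Set.mem_empty_iff_false, iff_false, not_and]
      intro h1 h2 _
      exact h1 t le_rfl (h2 ▸ hyZ)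
    have h1 : Svis τ Z a ρ m y = 0 := by
      rw [Svis]; exact Finset.sum_eq_zero fun i _ => hodo _
    have h2 : Sedge τ Z a ρ m y x = 0 := by
      rw [Sedge]; exact Finset.sum_eq_zero fun i _ => hedge _
    rw [h1, h2]
    simp [ENNReal.zero_div]
  · have hyadj := hτ y hyZ
    have hdeg : 0 < G.degree y :=
      (G.degree_pos_iff_exists_adj y).2 ⟨x, hadj.symm⟩
    have hconf_adj : ∀ i, G.Adj y (((finalConf τ Z a)^[i] ρ) y) := by
      intro i
      induction i with
      | zero => exact hρ y hyZ
      | succ i ih =>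
        rw [Function.iterate_succ_apply']
        obtain ⟨k, hk⟩ := finalConf_eq_iterate' (τ := τ) (Z := Z) (a := a)
          (ρ := (finalConf τ Z a)^[i] ρ) (y := y)
        rw [hk]
        exact adj_iterate hyadj.1 ih k
    by_cases hS : Svis τ Z a ρ m y = ⊤
    · obtain ⟨i, him, htop⟩ : ∃ i ∈ Finset.range m,
          odometer τ Z a ((finalConf τ Z a)^[i] ρ) y = ⊤ := by
        rw [← ENat.sum_eq_top, ← Svis]
        exact hS
      have hAinf : {t | aliveAt τ Z a ((finalConf τ Z a)^[i] ρ) t ∧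
          pos τ a ((finalConf τ Z a)^[i] ρ) t = y}.Infinite := by
        rw [← Set.encard_eq_top_iff]
        exact htop
      have hstep : ∀ k : ℕ, ∃ j : ℕ,
          (τ y)^[j + k] (((finalConf τ Z a)^[i] ρ) y) = x := by
        intro k
        have h1 : G.Adj y ((τ y)^[k] (((finalConf τ Z a)^[i] ρ) y)) :=
          adj_iterate hyadj.1 (hconf_adj i) k
        obtain ⟨j, hj⟩ := hyadj.2 _ h1 x hadj.symm
        exact ⟨j, by rw [Function.iterate_add_apply, hj]⟩
      have hE : edgeCount τ Z a ((finalConf τ Z a)^[i] ρ) y x = ⊤ :=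
        walkInfinite hAinf hstep
      have hSE : Sedge τ Z a ρ m y x = ⊤ := by
        rw [Sedge, ENat.sum_eq_top]
        exact ⟨i, him, hE⟩
      rw [hS, hSE, ENat.toENNReal_top,
        ENNReal.top_div_of_ne_top (ENNReal.natCast_ne_top _)]
    · have hfin : ∀ i < m, {t | aliveAt τ Z a ((finalConf τ Z a)^[i] ρ) t ∧
          pos τ a ((finalConf τ Z a)^[i] ρ) t = y}.Finite := by
        intro i hi
        rw [← Set.encard_ne_top_iff]
        intro hc
        refine hS ?_
        rw [Svis, ENat.sum_eq_top]
        exact ⟨i, Finset.mem_range.2 hi, hc⟩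
      have key : ∀ j, j ≤ m → ∃ Nj : ℕ,
          ((finalConf τ Z a)^[j] ρ) y = (τ y)^[Nj] (ρ y) ∧
          (∑ i ∈ Finset.range j, odometer τ Z a ((finalConf τ Z a)^[i] ρ) y) = (Nj : ℕ∞) ∧
          (∑ i ∈ Finset.range j, edgeCount τ Z a ((finalConf τ Z a)^[i] ρ) y x) =
            (((Finset.range Nj).filter (fun k => (τ y)^[k + 1] (ρ y) = x)).card : ℕ∞) := by
        intro j
        induction j with
        | zero => exact fun _ => ⟨0, rfl, by simp, by rw [Finset.filter_eq_empty_iff.2 (by simp)]; simp⟩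
        | succ j ih =>
          intro hj
          obtain ⟨Nj, hNc, hNo, hNe⟩ := ih (by omega)
          obtain ⟨n, hn1, hn2, hn3⟩ := walkFinite (hfin j (by omega))
          refine ⟨Nj + n, ?_, ?_, ?_⟩
          · rw [Function.iterate_succ_apply', hn2, hNc, ← Function.iterate_add_apply,
              Nat.add_comm]
          · rw [Finset.sum_range_succ, hNo, hn1, ← Nat.cast_add]
          · rw [Finset.sum_range_succ, hNe, hn3 x, ← Nat.cast_add]
            congr 1
            rw [filter_range_add_card (fun k => (τ y)^[k + 1] (ρ y) = x) Nj n]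
            congr 1
            congr 1
            apply Finset.filter_congr
            intro k _
            rw [hNc, ← Function.iterate_add_apply,
              show k + 1 + Nj = Nj + k + 1 by omega]
      obtain ⟨Nm, hc, ho, he⟩ := key m le_rfl
      have hret : (τ y)^[Nm] (ρ y) = ρ y := by rw [← hc, hper]
      obtain ⟨q, hq1, hq2⟩ := count_period (G.mem_neighborFinset y (ρ y) |>.2 (hρ y hyZ))
        ((G.mem_neighborFinset y x).2 hadj.symm)
        (fun z hz => (G.mem_neighborFinset y (τ y z)).2
          (hyadj.1 z ((G.mem_neighborFinset y z).1 hz)))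
        (fun z hz w hw => hyadj.2 z ((G.mem_neighborFinset y z).1 hz) w
          ((G.mem_neighborFinset y w).1 hw))
        hret
      rw [G.card_neighborFinset_eq_degree] at hq1
      have h1 : Sedge τ Z a ρ m y x = (q : ℕ∞) := by rw [Sedge, he, hq2]
      have h2 : Svis τ Z a ρ m y = ((G.degree y * q : ℕ) : ℕ∞) := by
        rw [Svis, ho, hq1]
      rw [h1, h2, ENat.toENNReal_coe, ENat.toENNReal_coe]
      rw [ENNReal.eq_div_iff (by exact_mod_cast hdeg.ne') (ENNReal.natCast_ne_top _)]
      push_cast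
      ring
end RotorWalk
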